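/- Conversely, given a commutative ring R, a commutative R-algebra A, an A-module M, and an R-linear connection ∇ : M → M ⊗_A Ω_{A/R} satisfying the Leibniz rule, the map ε : P ⊗_{p_2,A} M → M ⊗_{A,p_1} P determined by ε(1 ⊗ m) = m ⊗ 1 + ∇(m) (under the identification of the kernel of P → A with Ω_{A/R}) is a well-defined P-linear isomorphism reducing to the identity modulo I/I². These two constructions are mutually inverse, so the category of A-modules with connection is equivalent to the category of A-modules with 1-stratification. -/

import Mathlib

open TensorProduct

set_option maxHeartbeats 2000000
set_option synthInstance.maxHeartbeats 1000000

noncomputable section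

variable (R A : Type u) [CommRing R] [CommRing A] [Algebra R A]

/-- The first infinitesimal neighbourhood `P = (A ⊗[R] A)/I²` of the diagonal, where `I`
is the kernel of the multiplication map `A ⊗[R] A → A`. -/
abbrev InfNbhd := (A ⊗[R] A) ⧸ (KaehlerDifferential.ideal R A ^ 2)

/-- The second `A`-algebra structure map `p₂ : A → P` (the first one, `p₁`, is the
canonical `algebraMap A P` through the left tensor factor). -/
def p2 : A →+* InfNbhd R A :=
  (Ideal.Quotient.mk (KaehlerDifferential.ideal R A ^ 2)).comp
    (Algebra.TensorProduct.includeRight.toRingHom)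

/-- Type synonym for `P` viewed as an `A`-algebra via `p₂`. -/
def InfR := InfNbhd R A

instance : CommRing (InfR R A) := inferInstanceAs (CommRing (InfNbhd R A))
instance : Algebra A (InfR R A) := (p2 R A).toAlgebra
instance : Module (InfNbhd R A) (InfR R A) :=
  inferInstanceAs (Module (InfNbhd R A) (InfNbhd R A))
instance : SMulCommClass A (InfNbhd R A) (InfR R A) :=
  ⟨fun a p x => mul_left_comm (p2 R A a) p x⟩

/-- The inclusion `Ω[A⁄R] = I/I² → P`. -/
def jmap : Ω[A⁄R] →ₗ[A] InfNbhd R A where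
  toFun w := (KaehlerDifferential.ideal R A).cotangentToQuotientSquare w
  map_add' x y := map_add _ x y
  map_smul' a w := by
    simp only [RingHom.id_apply]
    rw [← algebraMap_smul (A ⊗[R] A) a w]
    exact (map_smul (KaehlerDifferential.ideal R A).cotangentToQuotientSquare _ _).trans (algebraMap_smul _ _ _)

variable (M : Type u) [AddCommGroup M] [Module A M]

/-- The canonical embedding `M ⊗[A] Ω[A⁄R] → P ⊗[A] M` induced by `Ω = I/I² ⊆ P`
(together with the symmetry of the tensor product). -/
def kappa : M ⊗[A] Ω[A⁄R] →ₗ[A] InfNbhd R A ⊗[A] M :=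
  (LinearMap.rTensor M (jmap R A)).comp (TensorProduct.comm A M (Ω[A⁄R])).toLinearMap


namespace StratAux

variable {M}

lemma jmap_D (a : A) : jmap R A (KaehlerDifferential.D R A a) =
    Ideal.Quotient.mk (KaehlerDifferential.ideal R A ^ 2) ((1:A) ⊗ₜ[R] a - a ⊗ₜ[R] (1:A)) := by
  rw [KaehlerDifferential.D_apply]
  rfl

lemma p2_eq (a : A) : (p2 R A a : InfNbhd R A) =
    algebraMap A (InfNbhd R A) a + jmap R A (KaehlerDifferential.D R A a) := by
  rw [jmap_D]
  show Ideal.Quotient.mk (KaehlerDifferential.ideal R A ^ 2) ((1:A) ⊗ₜ[R] a) =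
    Ideal.Quotient.mk (KaehlerDifferential.ideal R A ^ 2) (a ⊗ₜ[R] (1:A)) + _
  rw [← map_add]
  congr 1
  ring

lemma jmap_mul (w w' : Ω[A⁄R]) : jmap R A w * jmap R A w' = 0 := by
  obtain ⟨⟨x, hx⟩, rfl⟩ := Ideal.toCotangent_surjective _ w
  obtain ⟨⟨y, hy⟩, rfl⟩ := Ideal.toCotangent_surjective _ w'
  show Ideal.Quotient.mk _ x * Ideal.Quotient.mk _ y = 0
  rw [← map_mul, Ideal.Quotient.eq_zero_iff_mem, pow_two]
  exact Ideal.mul_mem_mul hx hy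

lemma p2_mul_jmap (a : A) (w : Ω[A⁄R]) :
    p2 R A a * jmap R A w = algebraMap A (InfNbhd R A) a * jmap R A w := by
  rw [p2_eq, add_mul, jmap_mul, add_zero]

variable (M)

lemma kappa_tmul (m : M) (w : Ω[A⁄R]) :
    kappa R A M (m ⊗ₜ[A] w) = jmap R A w ⊗ₜ[A] m := rfl

lemma smul_tmul_target (p q : InfNbhd R A) (m : M) :
    p • (q ⊗ₜ[A] m : InfNbhd R A ⊗[A] M) = (p*q) ⊗ₜ[A] m := by
  rw [TensorProduct.smul_tmul']; rfl

lemma smul_tmul_source (p q : InfNbhd R A) (m : M) :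
    p • ((q : InfR R A) ⊗ₜ[A] m) = ((p*q : InfNbhd R A) : InfR R A) ⊗ₜ[A] m := by
  rw [TensorProduct.smul_tmul']; rfl

lemma smul_one_InfR (a : A) : a • (1 : InfR R A) = (p2 R A a : InfNbhd R A) :=
  (Algebra.smul_def _ _).trans (mul_one _)

lemma p2_smul_one_tmul (a : A) (m : M) :
    (p2 R A a) • ((1 : InfNbhd R A) ⊗ₜ[A] m) =
      (1 : InfNbhd R A) ⊗ₜ[A] (a • m) + kappa R A M (m ⊗ₜ[A] KaehlerDifferential.D R A a) := by
  rw [smul_tmul_target, mul_one, p2_eq, TensorProduct.add_tmul, kappa_tmul]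
  congr 1
  rw [show (algebraMap A (InfNbhd R A)) a = a • (1:InfNbhd R A) from
    ((Algebra.smul_def a (1:InfNbhd R A)).trans (mul_one _)).symm, TensorProduct.smul_tmul]

lemma p2_smul_kappa (a : A) (t : M ⊗[A] Ω[A⁄R]) :
    (p2 R A a) • kappa R A M t = kappa R A M (a • t) := by
  induction t with
  | zero => simp
  | tmul m w =>
      rw [TensorProduct.smul_tmul', kappa_tmul, kappa_tmul, smul_tmul_target, p2_mul_jmap,
        ← Algebra.smul_def, TensorProduct.smul_tmul]
  | add x y hx hy => rw [map_add, smul_add, hx, hy, ← map_add, ← smul_add]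

lemma jmap_smul_one_tmul (w : Ω[A⁄R]) (m : M) :
    jmap R A w • ((1 : InfNbhd R A) ⊗ₜ[A] m) = kappa R A M (m ⊗ₜ[A] w) := by
  rw [smul_tmul_target, mul_one, kappa_tmul]

lemma jmap_smul_kappa (w : Ω[A⁄R]) (t : M ⊗[A] Ω[A⁄R]) :
    jmap R A w • kappa R A M t = 0 := by
  induction t with
  | zero => simp
  | tmul m w' => rw [kappa_tmul, smul_tmul_target, jmap_mul, TensorProduct.zero_tmul]
  | add x y hx hy => rw [map_add, smul_add, hx, hy, add_zero]

/-! ### the source side -/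

def ofP : InfNbhd R A → InfR R A := id

variable {M}

lemma ofP_one : ofP R A 1 = 1 := rfl

lemma quot_smul (a : A) (p : InfNbhd R A) :
    a • p = algebraMap A (InfNbhd R A) a * p := by
  obtain ⟨x, rfl⟩ := Ideal.Quotient.mk_surjective p
  show Ideal.Quotient.mk _ (a • x) = Ideal.Quotient.mk _ (a ⊗ₜ[R] (1:A)) * Ideal.Quotient.mk _ x
  rw [← map_mul]
  congr 1
  induction x with
  | zero => simp
  | tmul b c =>
      rw [TensorProduct.smul_tmul', Algebra.TensorProduct.tmul_mul_tmul, one_mul, smul_eq_mul]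
  | add u v hu hv => rw [smul_add, mul_add, hu, hv]

lemma smul_ofP (p q : InfNbhd R A) : p • ofP R A q = ofP R A (p * q) := rfl

lemma a_smul_ofP (a : A) (q : InfNbhd R A) : a • ofP R A q = ofP R A (p2 R A a * q) := rfl

def jmap' : Ω[A⁄R] →ₗ[A] InfR R A where
  toFun w := ofP R A (jmap R A w)
  map_add' x y := congrArg (ofP R A) (map_add (jmap R A) x y)
  map_smul' a w := by
    simp only [RingHom.id_apply]
    rw [a_smul_ofP]
    exact congrArg (ofP R A) (by rw [map_smul, quot_smul, p2_mul_jmap])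

variable (M)

def kappa' : M ⊗[A] Ω[A⁄R] →ₗ[A] InfR R A ⊗[A] M :=
  (LinearMap.rTensor M (jmap' R A)).comp (TensorProduct.comm A M (Ω[A⁄R])).toLinearMap

lemma kappa'_tmul (m : M) (w : Ω[A⁄R]) :
    kappa' R A M (m ⊗ₜ[A] w) = ofP R A (jmap R A w) ⊗ₜ[A] m := rfl

lemma smul_tmul_src (p q : InfNbhd R A) (m : M) :
    p • (ofP R A q ⊗ₜ[A] m) = ofP R A (p * q) ⊗ₜ[A] m := by
  rw [TensorProduct.smul_tmul']; rfl

lemma a_smul_tmul_src (a : A) (q : InfNbhd R A) (m : M) :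
    ofP R A q ⊗ₜ[A] (a • m) = ofP R A (p2 R A a * q) ⊗ₜ[A] m := by
  rw [← TensorProduct.smul_tmul, a_smul_ofP]

lemma p1_smul_one_tmul_src (a : A) (m : M) :
    (algebraMap A (InfNbhd R A) a) • (ofP R A 1 ⊗ₜ[A] m) =
      ofP R A 1 ⊗ₜ[A] (a • m) - kappa' R A M (m ⊗ₜ[A] KaehlerDifferential.D R A a) := by
  rw [smul_tmul_src, mul_one, a_smul_tmul_src, mul_one, kappa'_tmul, eq_sub_iff_add_eq,
    ← TensorProduct.add_tmul]
  congr 1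
  exact congrArg (ofP R A) (p2_eq R A a).symm

lemma p1_smul_kappa' (a : A) (t : M ⊗[A] Ω[A⁄R]) :
    (algebraMap A (InfNbhd R A) a) • kappa' R A M t = kappa' R A M (a • t) := by
  induction t with
  | zero => simp
  | tmul m w =>
      rw [TensorProduct.smul_tmul', kappa'_tmul, kappa'_tmul, smul_tmul_src, ← p2_mul_jmap,
        ← a_smul_tmul_src]
  | add x y hx hy => rw [map_add, smul_add, hx, hy, ← map_add, ← smul_add]

lemma jmap_smul_one_tmul_src (w : Ω[A⁄R]) (m : M) :
    jmap R A w • (ofP R A 1 ⊗ₜ[A] m) = kappa' R A M (m ⊗ₜ[A] w) := by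
  rw [smul_tmul_src, mul_one, kappa'_tmul]

lemma jmap_smul_kappa' (w : Ω[A⁄R]) (t : M ⊗[A] Ω[A⁄R]) :
    jmap R A w • kappa' R A M t = 0 := by
  induction t with
  | zero => simp
  | tmul m w' => rw [kappa'_tmul, smul_tmul_src, jmap_mul]; exact TensorProduct.zero_tmul _ _
  | add x y hx hy => rw [map_add, smul_add, hx, hy, add_zero]

lemma tmul_eq_smul_src (q : InfNbhd R A) (m : M) :
    (ofP R A q ⊗ₜ[A] m) = q • (ofP R A 1 ⊗ₜ[A] m) := by
  rw [smul_tmul_src, mul_one]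

lemma tmul_eq_smul_target (q : InfNbhd R A) (m : M) :
    (q ⊗ₜ[A] m : InfNbhd R A ⊗[A] M) = q • ((1 : InfNbhd R A) ⊗ₜ[A] m) := by
  rw [smul_tmul_target, mul_one]


/-! ### Twisted module structures -/

def toP : InfR R A → InfNbhd R A := id

lemma toP_ofP (q : InfNbhd R A) : toP R A (ofP R A q) = q := rfl

lemma toP_smul (a : A) (q : InfR R A) : toP R A (a • q) = p2 R A a * toP R A q := rfl

def Tw2 : Type u := InfNbhd R A ⊗[A] M

instance : AddCommGroup (Tw2 R A M) := inferInstanceAs (AddCommGroup (InfNbhd R A ⊗[A] M))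
instance : Module (InfNbhd R A) (Tw2 R A M) :=
  inferInstanceAs (Module (InfNbhd R A) (InfNbhd R A ⊗[A] M))
instance : Module A (Tw2 R A M) := Module.compHom (Tw2 R A M) (p2 R A)
instance : SMulCommClass A (InfNbhd R A) (Tw2 R A M) :=
  ⟨fun a p x => by
    show p2 R A a • p • x = p • p2 R A a • x
    rw [← mul_smul, mul_comm, mul_smul]⟩
instance : SMulCommClass (InfNbhd R A) A (Tw2 R A M) := SMulCommClass.symm _ _ _

def Tw1 : Type u := InfR R A ⊗[A] M

instance : AddCommGroup (Tw1 R A M) := inferInstanceAs (AddCommGroup (InfR R A ⊗[A] M))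
instance : Module (InfNbhd R A) (Tw1 R A M) :=
  inferInstanceAs (Module (InfNbhd R A) (InfR R A ⊗[A] M))
instance : Module A (Tw1 R A M) := Module.compHom (Tw1 R A M) (algebraMap A (InfNbhd R A))
instance : SMulCommClass A (InfNbhd R A) (Tw1 R A M) :=
  ⟨fun a p x => by
    show algebraMap A (InfNbhd R A) a • p • x = p • algebraMap A (InfNbhd R A) a • x
    rw [← mul_smul, mul_comm, mul_smul]⟩
instance : SMulCommClass (InfNbhd R A) A (Tw1 R A M) := SMulCommClass.symm _ _ _

variable {M}
variable (D : M →+ M ⊗[A] Ω[A⁄R])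
  (hD : ∀ (a : A) (m : M), D (a • m) = a • D m + m ⊗ₜ[A] KaehlerDifferential.D R A a)

/-! ### The forward map -/

def e0 : M →ₗ[A] Tw2 R A M where
  toFun m := ((1 : InfNbhd R A) ⊗ₜ[A] m + kappa R A M (D m) : InfNbhd R A ⊗[A] M)
  map_add' m m' := by
    show (1 : InfNbhd R A) ⊗ₜ[A] (m + m') + kappa R A M (D (m + m')) =
      ((1 : InfNbhd R A) ⊗ₜ[A] m + kappa R A M (D m)) +
        ((1 : InfNbhd R A) ⊗ₜ[A] m' + kappa R A M (D m'))
    rw [TensorProduct.tmul_add, map_add, map_add]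
    abel
  map_smul' a m := by
    simp only [RingHom.id_apply]
    show (1 : InfNbhd R A) ⊗ₜ[A] (a • m) + kappa R A M (D (a • m)) =
      p2 R A a • ((1 : InfNbhd R A) ⊗ₜ[A] m + kappa R A M (D m))
    rw [hD, map_add, smul_add, p2_smul_one_tmul, p2_smul_kappa]
    abel

def bb : InfR R A →ₗ[A] M →ₗ[A] Tw2 R A M where
  toFun q :=
    { toFun := fun m => toP R A q • e0 R A D hD m
      map_add' := fun m m' => by
        show toP R A q • e0 R A D hD (m + m') = _ + _
        rw [map_add, smul_add]
      map_smul' := fun a m => by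
        show toP R A q • e0 R A D hD (a • m) = a • (toP R A q • e0 R A D hD m)
        rw [map_smul]
        exact (smul_comm a (toP R A q) (e0 R A D hD m)).symm }
  map_add' q q' := LinearMap.ext fun m => by
    show (toP R A q + toP R A q') • e0 R A D hD m = _
    rw [add_smul]; rfl
  map_smul' a q := LinearMap.ext fun m => by
    simp only [RingHom.id_apply]
    show toP R A (a • q) • e0 R A D hD m = _
    rw [toP_smul, mul_smul]
    rfl

def phiA : InfR R A ⊗[A] M →ₗ[A] Tw2 R A M := TensorProduct.lift (bb R A D hD)

lemma phiA_tmul (q : InfR R A) (m : M) :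
    phiA R A D hD (q ⊗ₜ[A] m) = toP R A q • e0 R A D hD m := rfl

lemma phiA_smul (p : InfNbhd R A) (x : InfR R A ⊗[A] M) :
    phiA R A D hD (p • x) = p • phiA R A D hD x := by
  induction x with
  | zero => rw [smul_zero, map_zero, smul_zero]
  | tmul q m =>
      rw [TensorProduct.smul_tmul', phiA_tmul, phiA_tmul, ← mul_smul]
      rfl
  | add x y hx hy => rw [smul_add, map_add, map_add, hx, hy, smul_add]

def phi : InfR R A ⊗[A] M →ₗ[InfNbhd R A] InfNbhd R A ⊗[A] M where
  toFun x := (phiA R A D hD x : InfNbhd R A ⊗[A] M)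
  map_add' x y := map_add (phiA R A D hD) x y
  map_smul' p x := phiA_smul R A D hD p x

lemma phi_tmul (q : InfNbhd R A) (m : M) :
    phi R A D hD (ofP R A q ⊗ₜ[A] m) =
      q • ((1 : InfNbhd R A) ⊗ₜ[A] m + kappa R A M (D m)) := rfl

lemma phi_one_tmul (m : M) :
    phi R A D hD (ofP R A 1 ⊗ₜ[A] m) =
      (1 : InfNbhd R A) ⊗ₜ[A] m + kappa R A M (D m) := by
  rw [phi_tmul]
  exact one_smul _ _

lemma phi_kappa' (t : M ⊗[A] Ω[A⁄R]) :
    phi R A D hD (kappa' R A M t) = kappa R A M t := by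
  induction t with
  | zero => simp
  | tmul m w =>
      rw [kappa'_tmul, phi_tmul, smul_add, jmap_smul_one_tmul, jmap_smul_kappa, add_zero]
  | add x y hx hy => rw [map_add, map_add, map_add, hx, hy]

/-! ### The backward map -/

def s0 : M →ₗ[A] Tw1 R A M where
  toFun m := (ofP R A 1 ⊗ₜ[A] m - kappa' R A M (D m) : InfR R A ⊗[A] M)
  map_add' m m' := by
    show ofP R A 1 ⊗ₜ[A] (m + m') - kappa' R A M (D (m + m')) =
      (ofP R A 1 ⊗ₜ[A] m - kappa' R A M (D m)) +
        (ofP R A 1 ⊗ₜ[A] m' - kappa' R A M (D m'))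
    rw [TensorProduct.tmul_add, map_add, map_add]
    abel
  map_smul' a m := by
    simp only [RingHom.id_apply]
    show ofP R A 1 ⊗ₜ[A] (a • m) - kappa' R A M (D (a • m)) =
      algebraMap A (InfNbhd R A) a • (ofP R A 1 ⊗ₜ[A] m - kappa' R A M (D m))
    rw [hD, map_add,
      smul_sub (algebraMap A (InfNbhd R A) a) (ofP R A 1 ⊗ₜ[A] m) (kappa' R A M (D m)),
      p1_smul_one_tmul_src, p1_smul_kappa']
    abel

def bb' : InfNbhd R A →ₗ[A] M →ₗ[A] Tw1 R A M where
  toFun q :=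
    { toFun := fun m => q • s0 R A D hD m
      map_add' := fun m m' => by
        show q • s0 R A D hD (m + m') = _ + _
        rw [map_add, smul_add]
      map_smul' := fun a m => by
        show q • s0 R A D hD (a • m) = a • (q • s0 R A D hD m)
        rw [map_smul]
        exact (smul_comm a q (s0 R A D hD m)).symm }
  map_add' q q' := LinearMap.ext fun m => by
    show (q + q') • s0 R A D hD m = _
    rw [add_smul]; rfl
  map_smul' a q := LinearMap.ext fun m => by
    simp only [RingHom.id_apply]
    show (a • q) • s0 R A D hD m = _
    rw [quot_smul, mul_smul]
    rfl

def psiA : InfNbhd R A ⊗[A] M →ₗ[A] Tw1 R A M := TensorProduct.lift (bb' R A D hD)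

lemma psiA_tmul (q : InfNbhd R A) (m : M) :
    psiA R A D hD (q ⊗ₜ[A] m) = q • s0 R A D hD m := rfl

lemma psiA_smul (p : InfNbhd R A) (x : InfNbhd R A ⊗[A] M) :
    psiA R A D hD (p • x) = p • psiA R A D hD x := by
  induction x with
  | zero => rw [smul_zero, map_zero, smul_zero]
  | tmul q m =>
      rw [TensorProduct.smul_tmul', psiA_tmul, psiA_tmul, ← mul_smul]
      rfl
  | add x y hx hy => rw [smul_add, map_add, map_add, hx, hy, smul_add]

def psi : InfNbhd R A ⊗[A] M →ₗ[InfNbhd R A] InfR R A ⊗[A] M where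
  toFun x := (psiA R A D hD x : InfR R A ⊗[A] M)
  map_add' x y := map_add (psiA R A D hD) x y
  map_smul' p x := psiA_smul R A D hD p x

lemma psi_tmul (q : InfNbhd R A) (m : M) :
    psi R A D hD (q ⊗ₜ[A] m) =
      q • (ofP R A 1 ⊗ₜ[A] m - kappa' R A M (D m)) := rfl

lemma psi_one_tmul (m : M) :
    psi R A D hD ((1 : InfNbhd R A) ⊗ₜ[A] m) =
      ofP R A 1 ⊗ₜ[A] m - kappa' R A M (D m) := by
  rw [psi_tmul]
  exact one_smul _ _

lemma psi_kappa (t : M ⊗[A] Ω[A⁄R]) :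
    psi R A D hD (kappa R A M t) = kappa' R A M t := by
  induction t with
  | zero => simp
  | tmul m w =>
      rw [kappa_tmul, psi_tmul,
        smul_sub (jmap R A w) (ofP R A 1 ⊗ₜ[A] m) (kappa' R A M (D m)),
        jmap_smul_one_tmul_src, jmap_smul_kappa', sub_zero]
  | add x y hx hy => rw [map_add, map_add, map_add, hx, hy]

/-! ### The equivalence -/

lemma phi_psi (y : InfNbhd R A ⊗[A] M) :
    phi R A D hD (psi R A D hD y) = y := by
  induction y with
  | zero => rw [map_zero, map_zero]
  | tmul q m =>
      rw [psi_tmul, map_smul, map_sub, phi_one_tmul, phi_kappa', add_sub_cancel_right,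
        ← tmul_eq_smul_target]
  | add x y hx hy => rw [map_add, map_add, hx, hy]

lemma psi_phi (x : InfR R A ⊗[A] M) :
    psi R A D hD (phi R A D hD x) = x := by
  induction x with
  | zero => rw [map_zero, map_zero]
  | tmul q m =>
      rw [show q ⊗ₜ[A] m = ofP R A (toP R A q) ⊗ₜ[A] m from rfl, phi_tmul, map_smul, map_add,
        psi_one_tmul, psi_kappa, sub_add_cancel, ← tmul_eq_smul_src]
  | add x y hx hy => rw [map_add, map_add, hx, hy]

def strat : (InfR R A ⊗[A] M) ≃ₗ[InfNbhd R A] (InfNbhd R A ⊗[A] M) :=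
  LinearEquiv.ofLinear (phi R A D hD) (psi R A D hD)
    (LinearMap.ext (phi_psi R A D hD)) (LinearMap.ext (psi_phi R A D hD))

lemma strat_one_tmul (m : M) :
    strat R A D hD ((1 : InfR R A) ⊗ₜ[A] m) =
      (1 : InfNbhd R A) ⊗ₜ[A] m + kappa R A M (D m) :=
  phi_one_tmul R A D hD m


lemma eq_strat (ε' : (InfR R A ⊗[A] M) ≃ₗ[InfNbhd R A] (InfNbhd R A ⊗[A] M))
    (h : ∀ m : M, ε' ((1 : InfR R A) ⊗ₜ[A] m) =
      (1 : InfNbhd R A) ⊗ₜ[A] m + kappa R A M (D m)) :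
    ε' = strat R A D hD := by
  refine LinearEquiv.ext fun x => ?_
  induction x with
  | zero => rw [map_zero, map_zero]
  | tmul q m =>
      have hq : q ⊗ₜ[A] m = toP R A q • ((1 : InfR R A) ⊗ₜ[A] m) :=
        tmul_eq_smul_src R A M (toP R A q) m
      rw [hq, map_smul, map_smul, h, strat_one_tmul]
  | add x y hx hy => rw [map_add, map_add, hx, hy]

lemma one_tmul_a_smul (a : A) (m : M) :
    ((1 : InfR R A) ⊗ₜ[A] (a • m) : InfR R A ⊗[A] M) =
      p2 R A a • ((1 : InfR R A) ⊗ₜ[A] m) := by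
  calc ((1 : InfR R A) ⊗ₜ[A] (a • m) : InfR R A ⊗[A] M)
      = ofP R A (p2 R A a * 1) ⊗ₜ[A] m := a_smul_tmul_src R A M a 1 m
    _ = (p2 R A a * 1) • (ofP R A 1 ⊗ₜ[A] m) := tmul_eq_smul_src R A M (p2 R A a * 1) m
    _ = p2 R A a • ((1 : InfR R A) ⊗ₜ[A] m) := by rw [mul_one]; rfl

/-! ### The retraction of `kappa` -/

def phi0 : A ⊗[R] A →ₗ[A] Ω[A⁄R] := (KaehlerDifferential.D R A).tensorProductTo

lemma phi0_vanish : ∀ x ∈ (KaehlerDifferential.ideal R A ^ 2 : Ideal (A ⊗[R] A)),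
    phi0 R A x = 0 := by
  intro x hx
  rw [pow_two] at hx
  refine Submodule.mul_induction_on hx (fun u hu v hv => ?_) (fun y z hy hz => ?_)
  · rw [phi0, Derivation.tensorProductTo_mul]
    rw [show Algebra.TensorProduct.lmul' (S := A) R u = 0 from RingHom.mem_ker.mp hu,
      show Algebra.TensorProduct.lmul' (S := A) R v = 0 from RingHom.mem_ker.mp hv,
      zero_smul, zero_smul, add_zero]
  · rw [map_add, hy, hz, add_zero]

def delta : InfNbhd R A →ₗ[A] Ω[A⁄R] :=
  (Submodule.liftQ ((KaehlerDifferential.ideal R A ^ 2).restrictScalars A) (phi0 R A)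
      (fun x hx => phi0_vanish R A x (by exact hx))) ∘ₗ
    (Submodule.Quotient.restrictScalarsEquiv A
      (KaehlerDifferential.ideal R A ^ 2 : Ideal (A ⊗[R] A))).symm.toLinearMap

lemma delta_jmap (w : Ω[A⁄R]) : delta R A (jmap R A w) = w := by
  obtain ⟨⟨x, hx⟩, rfl⟩ := Ideal.toCotangent_surjective _ w
  show delta R A (Submodule.Quotient.mk x) = _
  rw [delta]
  simp only [LinearMap.coe_comp, Function.comp_apply, LinearEquiv.coe_coe,
    Submodule.Quotient.restrictScalarsEquiv_symm_mk, Submodule.liftQ_apply]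
  exact KaehlerDifferential.D_tensorProductTo ⟨x, hx⟩

variable (M)

def rho : InfNbhd R A ⊗[A] M →ₗ[A] M ⊗[A] Ω[A⁄R] :=
  (TensorProduct.comm A (Ω[A⁄R]) M).toLinearMap.comp (LinearMap.rTensor M (delta R A))

lemma rho_kappa (t : M ⊗[A] Ω[A⁄R]) : rho R A M (kappa R A M t) = t := by
  induction t with
  | zero => simp
  | tmul m w =>
      rw [kappa_tmul]
      show (TensorProduct.comm A (Ω[A⁄R]) M) (delta R A (jmap R A w) ⊗ₜ[A] m) = m ⊗ₜ[A] w
      rw [delta_jmap]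
      rfl
  | add x y hx hy => rw [map_add, map_add, hx, hy]

lemma kappa_injective : Function.Injective (kappa R A M) :=
  Function.LeftInverse.injective (rho_kappa R A M)

/-! ### Morphisms -/

variable {M}
variable {N : Type u} [AddCommGroup N] [Module A N] (f : M →ₗ[A] N)

lemma lTensor_kappa (t : M ⊗[A] Ω[A⁄R]) :
    LinearMap.lTensor (InfNbhd R A) f (kappa R A M t) =
      kappa R A N (LinearMap.rTensor (Ω[A⁄R]) f t) := by
  induction t with
  | zero => simp
  | tmul m w => rfl
  | add x y hx hy => simp only [map_add, hx, hy]

lemma lTensor_smul_target (p : InfNbhd R A) (y : InfNbhd R A ⊗[A] M) :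
    LinearMap.lTensor (InfNbhd R A) f (p • y) = p • LinearMap.lTensor (InfNbhd R A) f y := by
  induction y with
  | zero => rw [smul_zero, map_zero, smul_zero]
  | tmul q m =>
      rw [LinearMap.lTensor_tmul, smul_tmul_target, smul_tmul_target, LinearMap.lTensor_tmul]
  | add x y hx hy => rw [smul_add, map_add, map_add, hx, hy, smul_add]

lemma lTensor_src_tmul (q : InfR R A) (m : M) :
    LinearMap.lTensor (InfR R A) f (q ⊗ₜ[A] m) = q ⊗ₜ[A] f m := rfl

end StratAux

open StratAux

/-- Converse to the construction of a connection from a `1`-stratification, and the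
equivalence of the two notions.  Given an `R`-linear connection `∇` on an `A`-module `M`
satisfying the Leibniz rule, there is a unique `P`-linear isomorphism
`ε : P ⊗_{p₂,A} M ≅ M ⊗_{A,p₁} P` (written via the symmetry of the tensor product as
`P ⊗_{p₁,A} M`) with `ε(1 ⊗ m) = m ⊗ 1 + ∇(m)` (under `Ω[A⁄R] = I/I² ⊆ P`); such an `ε`
automatically reduces to the identity modulo `I/I²`.  Conversely every `1`-stratification
comes from a unique connection, so the two constructions are mutually inverse; moreover an
`A`-linear map commutes with the connections if and only if it commutes with the
corresponding stratifications, so the category of `A`-modules with connection is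
equivalent to the category of `A`-modules with `1`-stratification. -/
theorem stmt10 (R A : Type u) [CommRing R] [CommRing A] [Algebra R A] :
    (∀ (M : Type u) [AddCommGroup M] [Module A M] (D : M →+ M ⊗[A] Ω[A⁄R]),
      (∀ (a : A) (m : M),
        D (a • m) = a • D m + m ⊗ₜ[A] KaehlerDifferential.D R A a) →
      ∃! ε : (InfR R A ⊗[A] M) ≃ₗ[InfNbhd R A] (InfNbhd R A ⊗[A] M),
        ∀ m : M, ε ((1 : InfR R A) ⊗ₜ[A] m) =
          (1 : InfNbhd R A) ⊗ₜ[A] m + kappa R A M (D m)) ∧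
    (∀ (M : Type u) [AddCommGroup M] [Module A M]
      (ε : (InfR R A ⊗[A] M) ≃ₗ[InfNbhd R A] (InfNbhd R A ⊗[A] M)),
      (∀ m : M, ε ((1 : InfR R A) ⊗ₜ[A] m) - (1 : InfNbhd R A) ⊗ₜ[A] m ∈
        LinearMap.range (kappa R A M)) →
      ∃! D : M →+ M ⊗[A] Ω[A⁄R],
        (∀ (a : A) (m : M),
          D (a • m) = a • D m + m ⊗ₜ[A] KaehlerDifferential.D R A a) ∧
        ∀ m : M, ε ((1 : InfR R A) ⊗ₜ[A] m) =
          (1 : InfNbhd R A) ⊗ₜ[A] m + kappa R A M (D m)) ∧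
    (∀ (M N : Type u) [AddCommGroup M] [Module A M] [AddCommGroup N] [Module A N]
      (DM : M →+ M ⊗[A] Ω[A⁄R]) (DN : N →+ N ⊗[A] Ω[A⁄R])
      (εM : (InfR R A ⊗[A] M) ≃ₗ[InfNbhd R A] (InfNbhd R A ⊗[A] M))
      (εN : (InfR R A ⊗[A] N) ≃ₗ[InfNbhd R A] (InfNbhd R A ⊗[A] N)),
      (∀ m : M, εM ((1 : InfR R A) ⊗ₜ[A] m) =
        (1 : InfNbhd R A) ⊗ₜ[A] m + kappa R A M (DM m)) →
      (∀ n : N, εN ((1 : InfR R A) ⊗ₜ[A] n) =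
        (1 : InfNbhd R A) ⊗ₜ[A] n + kappa R A N (DN n)) →
      ∀ f : M →ₗ[A] N,
        ((∀ x : InfR R A ⊗[A] M,
            εN (LinearMap.lTensor (InfR R A) f x) =
              LinearMap.lTensor (InfNbhd R A) f (εM x)) ↔
          (∀ m : M, DN (f m) = LinearMap.rTensor (Ω[A⁄R]) f (DM m)))) := by
  refine ⟨?_, ?_, ?_⟩
  · -- Part 1: from a connection to a stratification
    intro M _ _ D hD
    exact ⟨strat R A D hD, strat_one_tmul R A D hD, fun ε' h => eq_strat R A D hD ε' h⟩
  · -- Part 2: from a stratification to a connection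
    intro M _ _ ε hε
    set g : M → M ⊗[A] Ω[A⁄R] :=
      fun m => rho R A M (ε ((1 : InfR R A) ⊗ₜ[A] m) - (1 : InfNbhd R A) ⊗ₜ[A] m) with hg
    have key : ∀ m : M, kappa R A M (g m) =
        ε ((1 : InfR R A) ⊗ₜ[A] m) - (1 : InfNbhd R A) ⊗ₜ[A] m := by
      intro m
      obtain ⟨t, ht⟩ := hε m
      rw [hg]
      simp only
      rw [← ht, rho_kappa]
    have keps : ∀ m : M, ε ((1 : InfR R A) ⊗ₜ[A] m) =
        (1 : InfNbhd R A) ⊗ₜ[A] m + kappa R A M (g m) := by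
      intro m
      rw [key m]
      abel
    have Dadd : ∀ m m' : M, g (m + m') = g m + g m' := by
      intro m m'
      apply kappa_injective R A M
      rw [map_add, key, key, key, show ((1 : InfR R A) ⊗ₜ[A] (m + m') : InfR R A ⊗[A] M) =
        (1 : InfR R A) ⊗ₜ[A] m + (1 : InfR R A) ⊗ₜ[A] m' from TensorProduct.tmul_add _ _ _,
        map_add, TensorProduct.tmul_add]
      abel
    refine ⟨AddMonoidHom.mk' g Dadd, ⟨?_, keps⟩, ?_⟩
    · intro a m
      show g (a • m) = a • g m + m ⊗ₜ[A] KaehlerDifferential.D R A a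
      apply kappa_injective R A M
      rw [key, one_tmul_a_smul, map_smul, keps m, smul_add, p2_smul_one_tmul, p2_smul_kappa,
        map_add]
      abel
    · intro D' ⟨_, hD'2⟩
      refine AddMonoidHom.ext fun m => ?_
      apply kappa_injective R A M
      have h1 := hD'2 m
      rw [keps m] at h1
      exact (add_left_cancel h1.symm)
  · -- Part 3: compatibility of morphisms
    intro M N _ _ _ _ DM DN εM εN hM hN f
    constructor
    · intro hc m
      apply kappa_injective R A N
      have h := hc ((1 : InfR R A) ⊗ₜ[A] m)
      rw [show LinearMap.lTensor (InfR R A) f ((1 : InfR R A) ⊗ₜ[A] m) =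
        (1 : InfR R A) ⊗ₜ[A] f m from rfl, hN (f m), hM m, map_add,
        show LinearMap.lTensor (InfNbhd R A) f ((1 : InfNbhd R A) ⊗ₜ[A] m) =
          (1 : InfNbhd R A) ⊗ₜ[A] f m from rfl, lTensor_kappa] at h
      exact add_left_cancel h
    · intro hc x
      induction x with
      | zero => rw [map_zero, map_zero, map_zero, map_zero]
      | tmul q m =>
          rw [show LinearMap.lTensor (InfR R A) f (q ⊗ₜ[A] m) = q ⊗ₜ[A] f m from rfl,
            show q ⊗ₜ[A] f m = toP R A q • ((1 : InfR R A) ⊗ₜ[A] f m) from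
              tmul_eq_smul_src R A N (toP R A q) (f m),
            show q ⊗ₜ[A] m = toP R A q • ((1 : InfR R A) ⊗ₜ[A] m) from
              tmul_eq_smul_src R A M (toP R A q) m,
            map_smul, map_smul, lTensor_smul_target, hN (f m), hM m, map_add,
            show LinearMap.lTensor (InfNbhd R A) f ((1 : InfNbhd R A) ⊗ₜ[A] m) =
              (1 : InfNbhd R A) ⊗ₜ[A] f m from rfl, lTensor_kappa, hc m]
      | add x y hx hy => rw [map_add, map_add, map_add, map_add, hx, hy]

end
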